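/- Let 0 < α < β, let a₀ ∈ [α, β], let ℓ ∈ ℝ, and let y, p ∈ ℝ². Set s := y·p and n := ‖y‖₂·‖p‖₂ (so s ≤ n by Cauchy–Schwarz). Suppose that for all b ∈ [α, β] it holds (b − a₀)(ℓ − s) ≥ ((b − a₀)²/(2b))·(n − s). Then: (i) if ℓ = s then n = s; (ii) if ℓ > s then a₀ = α; (iii) if ℓ < s then a₀ = β; (iv) if a₀ = α then ℓ − s ≥ ((β − α)/(2β))·(n − s) ≥ 0; (v) if a₀ = β then ℓ − s ≤ ((α − β)/(2α))·(n − s) ≤ 0. -/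
import Mathlib


open RealInnerProductSpace

/-- Characterization of solutions of the 2d maximum-principle variational inequality for the
linear cost `g(a) = ℓ·a` with control constraint `a ∈ [α, β]`. -/
theorem stmt_15 (α β : ℝ) (hα : 0 < α) (hαβ : α < β)
    (a₀ : ℝ) (ha₀ : a₀ ∈ Set.Icc α β) (ℓ : ℝ)
    (y p : EuclideanSpace ℝ (Fin 2)) (s n : ℝ)
    (hs : s = ⟪y, p⟫) (hn : n = ‖y‖ * ‖p‖)
    (h : ∀ b ∈ Set.Icc α β, (b - a₀) * (ℓ - s) ≥ (b - a₀) ^ 2 / (2 * b) * (n - s)) :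
    (ℓ = s → n = s) ∧
    (ℓ > s → a₀ = α) ∧
    (ℓ < s → a₀ = β) ∧
    (a₀ = α → ℓ - s ≥ (β - α) / (2 * β) * (n - s) ∧ (β - α) / (2 * β) * (n - s) ≥ 0) ∧
    (a₀ = β → ℓ - s ≤ (α - β) / (2 * α) * (n - s) ∧ (α - β) / (2 * α) * (n - s) ≤ 0) := by
  obtain ⟨ha₁, ha₂⟩ := ha₀
  have hns : 0 ≤ n - s := by
    have := real_inner_le_norm y p
    rw [hs, hn]; linarith
  have key : ∀ b ∈ Set.Icc α β, (b - a₀) ^ 2 * (n - s) ≤ (b - a₀) * (ℓ - s) * (2 * b) := by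
    intro b hb
    have hb0 : (0:ℝ) < 2 * b := by have := hb.1; linarith
    have := h b hb
    rw [ge_iff_le, div_mul_eq_mul_div, div_le_iff₀ hb0] at this
    exact this
  have kα := key α ⟨le_refl α, le_of_lt hαβ⟩
  have kβ := key β ⟨le_of_lt hαβ, le_refl β⟩
  refine ⟨?_, ?_, ?_, ?_, ?_⟩
  · intro hls
    by_contra hne
    have hns' : 0 < n - s := lt_of_le_of_ne hns (by intro hh; exact hne (by linarith))
    rcases lt_or_eq_of_le ha₂ with hlt | heq
    · have h2 : 0 < (β - a₀) ^ 2 := pow_pos (by linarith) 2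
      have hz : (β - a₀) * (ℓ - s) * (2 * β) = 0 := by rw [hls]; ring
      linarith [mul_pos h2 hns', kβ]
    · have hne2 : α - a₀ ≠ 0 := by intro hh; rw [heq] at hh; linarith
      have h2 : 0 < (α - a₀) ^ 2 := by rcases lt_or_gt_of_ne hne2 with h | h <;> nlinarith
      have hz : (α - a₀) * (ℓ - s) * (2 * α) = 0 := by rw [hls]; ring
      linarith [mul_pos h2 hns', kα]
  · intro hgt
    by_contra hne
    have hlt : α < a₀ := lt_of_le_of_ne ha₁ (Ne.symm hne)
    nlinarith [mul_nonneg (sq_nonneg (α - a₀)) hns,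
      mul_pos (mul_pos (sub_pos.mpr hlt) (sub_pos.mpr hgt)) hα]
  · intro hlt
    by_contra hne
    have hlt2 : a₀ < β := lt_of_le_of_ne ha₂ hne
    nlinarith [mul_nonneg (sq_nonneg (β - a₀)) hns,
      mul_pos (mul_pos (sub_pos.mpr hlt2) (sub_pos.mpr hlt)) (by linarith : (0:ℝ) < β)]
  · intro heq
    subst heq
    constructor
    · rw [ge_iff_le, div_mul_eq_mul_div, div_le_iff₀ (by linarith : (0:ℝ) < 2 * β)]
      nlinarith
    · apply mul_nonneg _ hns
      apply div_nonneg <;> linarith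
  · intro heq
    subst heq
    constructor
    · rw [div_mul_eq_mul_div, le_div_iff₀ (by linarith : (0:ℝ) < 2 * α)]
      nlinarith [kα, sub_pos.mpr hαβ]
    · apply mul_nonpos_of_nonpos_of_nonneg _ hns
      apply div_nonpos_of_nonpos_of_nonneg <;> linarith
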